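/- For a point x in X = π(D) and a chamber C ∈ 𝒞(D), one has x ∈ ri(C) if and only if C = σ(x), where σ(x) is the intersection of the projections of all faces of D whose projection contains x. -/

import Mathlib

open Set AffineSubspace

/-- If a continuous linear functional is `< c` on the interior of a convex set `S`,
then it is `≤ c` on all of `S` (provided the interior is nonempty). -/
lemma aux_le_of_lt_interior {W : Type*} [NormedAddCommGroup W] [NormedSpace ℝ W]
    {S : Set W} (hS : Convex ℝ S) {f : W →L[ℝ] ℝ} {c : ℝ}
    (hf : ∀ u ∈ interior S, f u < c) {z : W} (hz : z ∈ interior S)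
    {w : W} (hw : w ∈ S) : f w ≤ c := by
  have key : ∀ t : ℝ, t ∈ Set.Ioo (0 : ℝ) 1 → f (t • z + (1 - t) • w) < c := by
    intro t ht
    exact hf _ (hS.combo_interior_self_mem_interior hz hw ht.1 (by linarith [ht.2]) (by ring))
  have hcont : Continuous fun t : ℝ => f (t • z + (1 - t) • w) := by fun_prop
  have htend : Filter.Tendsto (fun t : ℝ => f (t • z + (1 - t) • w))
      (nhdsWithin 0 (Set.Ioi 0)) (nhds (f w)) := by
    have h1 := (hcont.tendsto 0).mono_left (nhdsWithin_le_nhds (s := Set.Ioi (0 : ℝ)))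
    convert h1 using 2
    norm_num
  refine le_of_tendsto htend ?_
  filter_upwards [Ioo_mem_nhdsGT_of_mem (by constructor <;> norm_num : (0 : ℝ) ∈ Set.Ico (0 : ℝ) 1)]
    with t ht using (key t ht).le

/-- Supporting hyperplane: a point of a convex set not in its intrinsic interior
lies in a proper exposed face. -/
lemma exists_exposed_ne {n : ℕ} {C : Set (Fin n → ℝ)} (hconv : Convex ℝ C)
    {x : Fin n → ℝ} (hxC : x ∈ C) (hx : x ∉ intrinsicInterior ℝ C) :
    ∃ G, IsExposed ℝ C G ∧ x ∈ G ∧ G ≠ C := by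
  classical
  have hx' : x ∈ affineSpan ℝ C := subset_affineSpan ℝ C hxC
  haveI : Nonempty C := ⟨⟨x, hxC⟩⟩
  haveI : Nonempty (affineSpan ℝ C) := ⟨⟨x, hx'⟩⟩
  set p' : affineSpan ℝ C := ⟨x, hx'⟩ with hp'
  set ψ := AffineIsometryEquiv.constVSub ℝ p' with hψ
  set B : Set ((affineSpan ℝ C).direction) := ψ.symm.toHomeomorph ⁻¹' ((↑) ⁻¹' C) with hB
  have hBconv : Convex ℝ B :=
    hconv.affine_preimage
      ((affineSpan ℝ C).subtype.comp ψ.symm.toAffineEquiv.toAffineMap)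
  have hspan : affineSpan ℝ B = ⊤ := by
    rw [show B = (ψ.symm.toAffineEquiv : _ ≃ᵃ[ℝ] _) ⁻¹' ((↑) ⁻¹' C) from rfl,
      ← comap_span, affineSpan_coe_preimage_eq_top, comap_top]
  have hint : (interior B).Nonempty :=
    (Convex.interior_nonempty_iff_affineSpan_eq_top hBconv).mpr hspan
  -- `0` corresponds to `x` itself
  have hψapp : ∀ q : affineSpan ℝ C, ψ q = p' -ᵥ q := fun q => by
    rw [hψ, AffineIsometryEquiv.coe_constVSub]
  have hψp' : ψ p' = 0 := by rw [hψapp, vsub_self]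
  have hcoe : ∀ q : affineSpan ℝ C, ((ψ q : (affineSpan ℝ C).direction) : Fin n → ℝ) = x - ↑q := by
    intro q
    rw [hψapp q]
    rw [AffineSubspace.coe_vsub]
    rfl
  have h0not : (0 : (affineSpan ℝ C).direction) ∉ interior B := by
    intro h0
    rw [hB, ← Homeomorph.preimage_interior] at h0
    apply hx
    refine mem_intrinsicInterior.2 ⟨p', ?_, rfl⟩
    have hs0 : ψ.symm 0 = p' := by rw [← hψp', ψ.symm_apply_apply]
    simpa [hs0] using h0
  obtain ⟨f, hf⟩ := geometric_hahn_banach_open_point (hBconv.interior) isOpen_interior h0not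
  have hneg : ∀ a ∈ interior B, f a < 0 := by
    intro a ha
    simpa using hf a ha
  obtain ⟨z0, hz0⟩ := hint
  -- extend `f` to a continuous linear functional on the whole space
  obtain ⟨Q, hQ⟩ := Submodule.exists_isCompl (affineSpan ℝ C).direction
  set pr := Submodule.projectionOnto _ _ hQ with hpr
  set h : (Fin n → ℝ) →L[ℝ] ℝ := LinearMap.toContinuousLinearMap (f.toLinearMap ∘ₗ pr) with hh
  have hkey : ∀ w : (affineSpan ℝ C).direction, h ↑w = f w := by
    intro w
    rw [hh]
    simp [hpr, Submodule.projectionOnto_apply_left hQ w]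
  -- h x ≤ h y for all y ∈ C
  have hle : ∀ y ∈ C, h x ≤ h y := by
    intro y hy
    set q : affineSpan ℝ C := ⟨y, subset_affineSpan ℝ C hy⟩ with hq
    have hwB : ψ q ∈ B := by
      rw [hB]
      simp only [Set.mem_preimage, AffineIsometryEquiv.coe_toHomeomorph, ψ.symm_apply_apply]
      exact hy
    have hfw : f (ψ q) ≤ 0 := aux_le_of_lt_interior hBconv hneg hz0 hwB
    have hcq : ((ψ q : (affineSpan ℝ C).direction) : Fin n → ℝ) = x - y := hcoe q
    have := hkey (ψ q)
    rw [hcq, map_sub] at this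
    linarith
  -- strict inequality at some point
  have hz0B : z0 ∈ B := interior_subset hz0
  set y0 : Fin n → ℝ := ((ψ.symm z0 : affineSpan ℝ C) : Fin n → ℝ) with hy0
  have hy0C : y0 ∈ C := hz0B
  have hy0coe : (z0 : Fin n → ℝ) = x - y0 := by
    have := hcoe (ψ.symm z0)
    rwa [ψ.apply_symm_apply] at this
  have hfz0 : f z0 < 0 := hneg z0 hz0
  have hlt : h x < h y0 := by
    have := hkey z0
    rw [hy0coe, map_sub] at this
    linarith
  -- the exposed face
  refine ⟨{u ∈ C | ∀ v ∈ C, (-h) v ≤ (-h) u}, fun _ => ⟨-h, rfl⟩,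
    ⟨hxC, fun v hv => ?_⟩, ?_⟩
  · simpa using hle v hv
  · intro hGC
    have hy0G : y0 ∈ {u ∈ C | ∀ v ∈ C, (-h) v ≤ (-h) u} := by rw [hGC]; exact hy0C
    have := hy0G.2 x hxC
    simp only [ContinuousLinearMap.neg_apply, neg_le_neg_iff] at this
    linarith

theorem stmt_6 {nx ny : ℕ}
    (D : Set ((Fin nx → ℝ) × (Fin ny → ℝ))) (hDconv : Convex ℝ D) (hDcomp : IsCompact D)
    (X : Set (Fin nx → ℝ)) (hX : X = Prod.fst '' D)
    (σ : (Fin nx → ℝ) → Set (Fin nx → ℝ))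
    (hσ : ∀ x, σ x = ⋂₀ {S | ∃ F : Set ((Fin nx → ℝ) × (Fin ny → ℝ)),
      IsExposed ℝ D F ∧ S = Prod.fst '' F ∧ x ∈ S})
    (𝒞 : Set (Set (Fin nx → ℝ))) (h𝒞 : 𝒞 = σ '' X)
    (hpartition : ∀ x ∈ X, ∃! C, C ∈ 𝒞 ∧ x ∈ intrinsicInterior ℝ C)
    (hfaceclosed : ∀ C ∈ 𝒞, ∀ F, IsExposed ℝ C F → F.Nonempty → F ∈ 𝒞) :
    ∀ x ∈ X, ∀ C ∈ 𝒞, (x ∈ intrinsicInterior ℝ C ↔ C = σ x) := by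
  -- basic facts about σ
  have hself : ∀ x, x ∈ σ x := by
    intro x
    rw [hσ]
    rintro S ⟨F, hF, rfl, hxS⟩
    exact hxS
  have hmono : ∀ x z, x ∈ σ z → σ x ⊆ σ z := by
    intro x z hxz u hu
    rw [hσ] at hu hxz ⊢
    rintro S hS
    obtain ⟨F, hF, rfl, hzS⟩ := hS
    have hxS : x ∈ Prod.fst '' F := hxz _ ⟨F, hF, rfl, hzS⟩
    exact hu _ ⟨F, hF, rfl, hxS⟩
  have hconvσ : ∀ x, Convex ℝ (σ x) := by
    intro x
    rw [hσ]
    apply convex_sInter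
    rintro S ⟨F, hF, rfl, -⟩
    exact (hF.convex hDconv).linear_image (LinearMap.fst ℝ _ _)
  -- the key claim: x lies in the intrinsic interior of σ x
  have hclaim : ∀ x ∈ X, x ∈ intrinsicInterior ℝ (σ x) := by
    intro x hxX
    by_contra hri
    obtain ⟨G, hGexp, hxG, hGne⟩ := exists_exposed_ne (hconvσ x) (hself x) hri
    have hσmem : σ x ∈ 𝒞 := h𝒞 ▸ ⟨x, hxX, rfl⟩
    have hG𝒞 : G ∈ 𝒞 := hfaceclosed _ hσmem G hGexp ⟨x, hxG⟩
    rw [h𝒞] at hG𝒞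
    obtain ⟨z, hzX, hzG⟩ := hG𝒞
    apply hGne
    refine subset_antisymm hGexp.subset ?_
    have : x ∈ σ z := hzG ▸ hxG
    exact hzG ▸ hmono x z this
  have hσC : ∀ x ∈ X, σ x ∈ 𝒞 := fun x hxX => h𝒞 ▸ ⟨x, hxX, rfl⟩
  intro x hxX C hC
  constructor
  · intro hri
    obtain ⟨C₀, _, huniq⟩ := hpartition x hxX
    have h1 := huniq C ⟨hC, hri⟩
    have h2 := huniq (σ x) ⟨hσC x hxX, hclaim x hxX⟩
    rw [h1, ← h2]
  · intro hCe
    rw [hCe]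
    exact hclaim x hxX
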